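/- arXiv:0812.1951 — 2 statements merged into one kernel-verified Lean document; each statement's English description precedes it below -/
import Mathlib

section
/- Let L ⊆ Σ_{r^m}* be a regular language. Then the closure of the convex hull of the regular set of integer vectors ρ(L) is a polyhedral convex set: there exist finitely many pairs (α_1,c_1),…,(α_k,c_k) ∈ ℝ^m × ℝ such that cl(conv(ρ(L))) = ⋂_{j=1}^k {x ∈ ℝ^m : ⟨α_j, x⟩ + c_j ≥ 0}, where ⟨·,·⟩ is the standard scalar product on ℝ^m. -/
/-- The alphabet `Σ_{r^m}` of digit vectors. -/
abbrev Alpha (r m : ℕ) := Fin m → Fin r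
abbrev Word (r m : ℕ) := List (Alpha r m)

/-- `ρ(b₁⋯bₙ) = Σᵢ r^(i-1)·bᵢ` (least significant digit first), viewed in `ℝ^m`. -/
noncomputable def rho (r m : ℕ) : Word r m → (Fin m → ℝ)
  | [] => 0
  | b :: w => (fun j => (b j : ℝ)) + (r : ℝ) • rho r m w

/-- `Γ_σ(x) = r^|σ|·x + ρ(σ)`. -/
noncomputable def Gam (r m : ℕ) (σ : Word r m) (x : Fin m → ℝ) : Fin m → ℝ :=
  (r : ℝ) ^ σ.length • x + rho r m σ

/-- The inverse bijection `Γ_σ⁻¹(y) = (y - ρ(σ))/r^|σ|`. -/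
noncomputable def GamInv (r m : ℕ) (σ : Word r m) (y : Fin m → ℝ) : Fin m → ℝ :=
  ((r : ℝ) ^ σ.length)⁻¹ • (y - rho r m σ)

/-- `ξ(σ) = ρ(σ)/(1 - r^|σ|)` (meaningful for nonempty `σ`). -/
noncomputable def xi (r m : ℕ) (σ : Word r m) : Fin m → ℝ :=
  (1 - (r : ℝ) ^ σ.length)⁻¹ • rho r m σ

/-- `ρ(L) = {ρ(σ) : σ ∈ L}`. -/
def rhoSet (r m : ℕ) (L : Set (Word r m)) : Set (Fin m → ℝ) :=
  {x | ∃ σ ∈ L, x = rho r m σ}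

/-- `ξ(L) = {ξ(σ) : σ ∈ L, σ ≠ ε}`. -/
def xiSet (r m : ℕ) (L : Set (Word r m)) : Set (Fin m → ℝ) :=
  {x | ∃ σ ∈ L, σ ≠ [] ∧ x = xi r m σ}

/-- Kleene star of a language. -/
def kstar' {α : Type*} (L : Set (List α)) : Set (List α) :=
  {w | ∃ ws : List (List α), (∀ u ∈ ws, u ∈ L) ∧ w = ws.flatten}

/-- Concatenation of two languages. -/
def catL {α : Type*} (A B : Set (List α)) : Set (List α) :=
  {w | ∃ a ∈ A, ∃ b ∈ B, w = a ++ b}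

/-- `chainLang σ Ls n = σ_{n+1}·(L_n)*·σ_n ⋯ (L_1)*·σ_1`. -/
def chainLang {α : Type*} (σ : ℕ → List α) (Ls : ℕ → Set (List α)) : ℕ → Set (List α)
  | 0 => {σ 1}
  | n + 1 => catL {σ (n + 2)} (catL (kstar' (Ls (n + 1))) (chainLang σ Ls n))

/-- `catDown σ hi lo = σ_hi·σ_{hi-1}⋯σ_lo` (empty if `lo > hi`). -/
def catDown {α : Type*} (σ : ℕ → List α) (hi lo : ℕ) : List α :=
  ((List.range (hi + 1 - lo)).map fun j => σ (hi - j)).flatten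

/-- `catUp σ k = σ_1·σ_2⋯σ_k`. -/
def catUp {α : Type*} (σ : ℕ → List α) (k : ℕ) : List α :=
  ((List.range k).map fun j => σ (j + 1)).flatten

/-- `σ^k`, the `k`-fold concatenation of `σ`. -/
def repK {α : Type*} (σ : List α) (k : ℕ) : List α := (List.replicate k σ).flatten

/-- `ℝ₋·X = {t·x : t ≤ 0, x ∈ X}`. -/
def negSmul {m : ℕ} (X : Set (Fin m → ℝ)) : Set (Fin m → ℝ) :=
  {y | ∃ t : ℝ, t ≤ 0 ∧ ∃ x ∈ X, y = t • x}

/-- The cone `C(R)` generated by a finite set of rays. -/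
def coneOf {m : ℕ} (R : Finset ((Fin m → ℝ) × ℝ)) : Set ((Fin m → ℝ) × ℝ) :=
  {y | ∃ t : ((Fin m → ℝ) × ℝ) → ℝ, (∀ p, 0 ≤ t p) ∧ y = ∑ p ∈ R, t p • p}

/-- The polyhedral convex set `P(R) = {x : (x,1) ∈ C(R)}`. -/
def polyOf {m : ℕ} (R : Finset ((Fin m → ℝ) × ℝ)) : Set (Fin m → ℝ) :=
  {x | (x, (1 : ℝ)) ∈ coneOf R}


open Finset

/-- Fourier–Motzkin single-variable elimination step. -/
lemma fm_step {ι : Type*} [Fintype ι] {Z : Type*} (c : ι → Z → ℝ) (d : ι → ℝ) (z : Z) :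
    (∃ s : ℝ, ∀ i, c i z + d i * s ≤ 0) ↔
      ((∀ i, d i = 0 → c i z ≤ 0) ∧
        ∀ i j, 0 < d i → d j < 0 → d i * c j z - d j * c i z ≤ 0) := by
  constructor
  · rintro ⟨s, hs⟩
    refine ⟨fun i hi => by simpa [hi] using hs i, fun i j hi hj => ?_⟩
    have h1 := hs i
    have h2 := hs j
    nlinarith
  · rintro ⟨h0, hp⟩
    by_cases hU : (univ.filter (fun i => 0 < d i)).Nonempty
    · obtain ⟨i0, hi0mem, hi0⟩ := Finset.exists_mem_eq_inf' hU (fun i => -(c i z) / d i)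
      have hi0pos : 0 < d i0 := by simpa using (Finset.mem_filter.1 hi0mem).2
      set s : ℝ := -(c i0 z) / d i0 with hsdef
      have hcan : d i0 * s = -(c i0 z) := by
        rw [hsdef]; field_simp
      refine ⟨s, fun i => ?_⟩
      rcases lt_trichotomy (d i) 0 with hneg | hzero | hpos
      · have hpair := hp i0 i hi0pos hneg
        nlinarith [mul_le_mul_of_nonneg_left (le_refl s) (le_of_lt hi0pos)]
      · simpa [hzero] using h0 i hzero
      · have hle : s ≤ -(c i z) / d i := by
          rw [← hi0]
          exact Finset.inf'_le _ (Finset.mem_filter.2 ⟨Finset.mem_univ i, hpos⟩)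
        have h2 : d i * (-(c i z) / d i) = -(c i z) := by field_simp
        have h3 : d i * s ≤ d i * (-(c i z) / d i) :=
          mul_le_mul_of_nonneg_left hle (le_of_lt hpos)
        linarith
    · by_cases hL : (univ.filter (fun j => d j < 0)).Nonempty
      · refine ⟨(univ.filter (fun j => d j < 0)).sup' hL (fun j => c j z / (-(d j))),
          fun i => ?_⟩
        set s : ℝ := (univ.filter (fun j => d j < 0)).sup' hL (fun j => c j z / (-(d j)))
        rcases lt_trichotomy (d i) 0 with hneg | hzero | hpos
        · have hle : c i z / (-(d i)) ≤ s :=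
            Finset.le_sup' (fun j => c j z / (-(d j)))
              (Finset.mem_filter.2 ⟨Finset.mem_univ i, hneg⟩)
          have hpos' : (0:ℝ) < -(d i) := by linarith
          have h2 : (-(d i)) * (c i z / (-(d i))) = c i z := by
            rw [mul_comm]; exact div_mul_cancel₀ _ (ne_of_gt hpos')
          have h3 : (-(d i)) * (c i z / (-(d i))) ≤ (-(d i)) * s :=
            mul_le_mul_of_nonneg_left hle (le_of_lt hpos')
          nlinarith
        · simpa [hzero] using h0 i hzero
        · exact absurd ⟨i, Finset.mem_filter.2 ⟨Finset.mem_univ i, hpos⟩⟩ hU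
      · refine ⟨0, fun i => ?_⟩
        have hzero : d i = 0 := by
          by_contra h
          rcases lt_or_gt_of_ne h with h' | h'
          · exact hL ⟨i, Finset.mem_filter.2 ⟨Finset.mem_univ i, h'⟩⟩
          · exact hU ⟨i, Finset.mem_filter.2 ⟨Finset.mem_univ i, h'⟩⟩
        simpa [hzero] using h0 i hzero

lemma fm_comb_eq {m n : ℕ} (u v : ℝ) (a1 a2 : Fin m → ℝ) (b1 b2 : ℝ) (d1 d2 : Fin n → ℝ)
    (x : Fin m → ℝ) (s : Fin n → ℝ) :
    (∑ p, (u * a2 p - v * a1 p) * x p) + (u * b2 - v * b1) + ∑ q, (u * d2 q - v * d1 q) * s q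
      = u * ((∑ p, a2 p * x p) + b2 + ∑ q, d2 q * s q)
        - v * ((∑ p, a1 p * x p) + b1 + ∑ q, d1 q * s q) := by
  simp only [sub_mul, mul_assoc, Finset.sum_sub_distrib, ← Finset.mul_sum]
  ring

/-- Iterated Fourier–Motzkin elimination: projection of a polyhedron is a polyhedron. -/
lemma fm_elim {m : ℕ} : ∀ (n : ℕ) (ι : Type) (_ : Fintype ι)
    (a : ι → (Fin m → ℝ)) (b : ι → ℝ) (d : ι → Fin n → ℝ),
    ∃ (k : ℕ) (A : Fin k → (Fin m → ℝ)) (B : Fin k → ℝ),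
      {x : Fin m → ℝ | ∃ s : Fin n → ℝ, ∀ i, (∑ p, a i p * x p) + b i + ∑ q, d i q * s q ≤ 0}
        = {x : Fin m → ℝ | ∀ j, (∑ p, A j p * x p) + B j ≤ 0} := by
  intro n
  induction n with
  | zero =>
    intro ι _ a b d
    refine ⟨Fintype.card ι, fun j => a ((Fintype.equivFin ι).symm j),
      fun j => b ((Fintype.equivFin ι).symm j), ?_⟩
    ext x
    simp only [Set.mem_setOf_eq]
    constructor
    · rintro ⟨s, hs⟩ j
      simpa using hs ((Fintype.equivFin ι).symm j)
    · intro h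
      refine ⟨fun q => 0, fun i => ?_⟩
      have := h (Fintype.equivFin ι i)
      simpa using this
  | succ n ih =>
    intro ι _ a b d
    classical
    set dl : ι → ℝ := fun i => d i (Fin.last n) with hdl
    set c : ι → (Fin m → ℝ) × (Fin n → ℝ) → ℝ :=
      fun i z => (∑ p, a i p * z.1 p) + b i + ∑ q, d i q.castSucc * z.2 q with hc
    set a' : ι ⊕ ι × ι → Fin m → ℝ := Sum.elim
      (fun i => if dl i = 0 then a i else 0)
      (fun ij => if 0 < dl ij.1 ∧ dl ij.2 < 0 then
        (fun p => dl ij.1 * a ij.2 p - dl ij.2 * a ij.1 p) else 0) with ha'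
    set b' : ι ⊕ ι × ι → ℝ := Sum.elim
      (fun i => if dl i = 0 then b i else 0)
      (fun ij => if 0 < dl ij.1 ∧ dl ij.2 < 0 then
        dl ij.1 * b ij.2 - dl ij.2 * b ij.1 else 0) with hb'
    set d' : ι ⊕ ι × ι → Fin n → ℝ := Sum.elim
      (fun i => if dl i = 0 then (fun q => d i q.castSucc) else 0)
      (fun ij => if 0 < dl ij.1 ∧ dl ij.2 < 0 then
        (fun q => dl ij.1 * d ij.2 q.castSucc - dl ij.2 * d ij.1 q.castSucc) else 0) with hd'
    obtain ⟨k, A, B, hAB⟩ := ih (ι ⊕ ι × ι) inferInstance a' b' d'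
    refine ⟨k, A, B, ?_⟩
    rw [← hAB]
    ext x
    simp only [Set.mem_setOf_eq]
    have hsplit : ∀ (i : ι) (s : Fin (n+1) → ℝ),
        (∑ p, a i p * x p) + b i + ∑ q, d i q * s q
          = c i (x, Fin.init s) + dl i * s (Fin.last n) := by
      intro i s
      rw [Fin.sum_univ_castSucc (f := fun q => d i q * s q)]
      simp only [hc, hdl, Fin.init]
      ring
    have hrow : ∀ (i' : ι ⊕ ι × ι) (s' : Fin n → ℝ),
        (∑ p, a' i' p * x p) + b' i' + ∑ q, d' i' q * s' q ≤ 0 ↔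
          (match i' with
            | .inl i => dl i = 0 → c i (x, s') ≤ 0
            | .inr ij => 0 < dl ij.1 → dl ij.2 < 0 →
                dl ij.1 * c ij.2 (x, s') - dl ij.2 * c ij.1 (x, s') ≤ 0) := by
      rintro (i | ⟨i, j⟩) s'
      · by_cases h : dl i = 0
        · simp only [ha', hb', hd', Sum.elim_inl, if_pos h, hc]
          constructor
          · intro hle _; exact hle
          · intro himp; exact himp h
        · simp only [ha', hb', hd', Sum.elim_inl, if_neg h]
          simp [h]
      · by_cases h : 0 < dl i ∧ dl j < 0
        · simp only [ha', hb', hd', Sum.elim_inr, if_pos h, hc]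
          rw [fm_comb_eq]
          constructor
          · intro hle _ _; exact hle
          · intro himp; exact himp h.1 h.2
        · simp only [ha', hb', hd', Sum.elim_inr, if_neg h]
          constructor
          · intro _ h1 h2; exact absurd ⟨h1, h2⟩ h
          · intro _; simp
    constructor
    · rintro ⟨s, hs⟩
      have hfm := (fm_step c dl (x, Fin.init s)).1
        ⟨s (Fin.last n), fun i => by rw [← hsplit i s]; exact hs i⟩
      refine ⟨Fin.init s, fun i' => (hrow i' (Fin.init s)).2 ?_⟩
      match i' with
      | .inl i => exact fun h0 => hfm.1 i h0
      | .inr ij => exact fun h1 h2 => hfm.2 ij.1 ij.2 h1 h2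
    · rintro ⟨s', hs'⟩
      have hfm := (fm_step c dl (x, s')).2
        ⟨fun i h0 => by have := (hrow (.inl i) s').1 (hs' _); exact this h0,
         fun i j h1 h2 => by have := (hrow (.inr (i, j)) s').1 (hs' _); exact this h1 h2⟩
      obtain ⟨sl, hsl⟩ := hfm
      refine ⟨Fin.snoc s' sl, fun i => ?_⟩
      rw [hsplit i]
      simpa [Fin.init_snoc, Fin.snoc_last] using hsl i

section RhoAlg

variable {r m : ℕ}

lemma rho_append (u v : Word r m) :
    rho r m (u ++ v) = rho r m u + ((r : ℝ) ^ u.length) • rho r m v := by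
  induction u with
  | nil => simp [rho]
  | cons b u ih =>
    show rho r m (b :: (u ++ v)) = _
    rw [rho, ih, rho]
    rw [List.length_cons, pow_succ]
    rw [smul_add, smul_smul]
    rw [add_assoc]
    ring_nf

/-- `h(y,z) = (r^|y| - 1)⁻¹ • ρ(y) + ρ(z)`, the ray vector of a pumping pair. -/
noncomputable def hvec (r m : ℕ) (y z : Word r m) : Fin m → ℝ :=
  (((r : ℝ) ^ y.length - 1)⁻¹) • rho r m y + rho r m z

lemma one_lt_pow_len (hr : 2 ≤ r) {y : Word r m} (hy : y ≠ []) :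
    (1 : ℝ) < (r : ℝ) ^ y.length := by
  have h2 : (2 : ℝ) ≤ (r : ℝ) := by exact_mod_cast hr
  have hlen : 1 ≤ y.length := List.length_pos_iff.2 hy
  calc (1 : ℝ) < 2 := one_lt_two
    _ ≤ (2 : ℝ) ^ y.length := le_self_pow₀ one_le_two (by omega)
    _ ≤ (r : ℝ) ^ y.length := pow_le_pow_left₀ (by norm_num) h2 _

lemma pow_len_sub_one_pos (hr : 2 ≤ r) {y : Word r m} (hy : y ≠ []) :
    (0 : ℝ) < (r : ℝ) ^ y.length - 1 := by
  have := one_lt_pow_len hr hy; linarith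

lemma smul_hvec (hr : 2 ≤ r) {y : Word r m} (hy : y ≠ []) (z : Word r m) :
    ((r : ℝ) ^ y.length - 1) • hvec r m y z
      = rho r m y + ((r : ℝ) ^ y.length - 1) • rho r m z := by
  unfold hvec
  rw [smul_add, smul_smul, mul_inv_cancel₀ (ne_of_gt (pow_len_sub_one_pos hr hy)), one_smul]

/-- The z-pumping identity. -/
lemma hvec_split_z (hr : 2 ≤ r) (y z1 u z2 : Word r m) (hu : u ≠ []) :
    hvec r m y (z1 ++ (u ++ z2))
      = hvec r m y (z1 ++ z2)
        + ((r : ℝ) ^ z1.length * ((r : ℝ) ^ u.length - 1)) • hvec r m u z2 := by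
  have key : ((r : ℝ) ^ z1.length * ((r : ℝ) ^ u.length - 1)) • hvec r m u z2
      = (r : ℝ) ^ z1.length • (rho r m u + ((r : ℝ) ^ u.length - 1) • rho r m z2) := by
    rw [← smul_smul, smul_hvec hr hu]
  rw [key]
  unfold hvec
  rw [rho_append z1 (u ++ z2), rho_append u z2, rho_append z1 z2]
  module

/-- The y-pumping identity. -/
lemma hvec_split_y (hr : 2 ≤ r) (a b c z : Word r m) (hb : b ≠ []) (hac : a ++ c ≠ [])
    (habc : a ++ (b ++ c) ≠ []) :
    ((r : ℝ) ^ (a ++ (b ++ c)).length - 1) • hvec r m (a ++ (b ++ c)) z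
      = ((r : ℝ) ^ (a ++ c).length - 1) • hvec r m (a ++ c) z
        + ((r : ℝ) ^ a.length * ((r : ℝ) ^ b.length - 1)) • hvec r m b (c ++ z) := by
  rw [smul_hvec hr habc, smul_hvec hr hac, ← smul_smul, smul_hvec hr hb]
  rw [rho_append a (b ++ c), rho_append b c, rho_append a c, rho_append c z]
  simp only [List.length_append, pow_add]
  module

section RepK

variable {r m : ℕ}

lemma repK_succ {α : Type*} (y : List α) (k : ℕ) : repK y (k+1) = y ++ repK y k := by
  simp [repK, List.replicate_succ]

lemma length_repK {α : Type*} (y : List α) (k : ℕ) : (repK y k).length = k * y.length := by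
  induction k with
  | zero => simp [repK]
  | succ k ih => rw [repK_succ, List.length_append, ih]; ring

lemma rho_repK (y : Word r m) (k : ℕ) :
    rho r m (repK y k)
      = (∑ i ∈ Finset.range k, ((r:ℝ) ^ y.length) ^ i) • rho r m y := by
  induction k with
  | zero => simp [repK, rho]
  | succ k ih =>
    rw [repK_succ, rho_append, ih, smul_smul, geom_sum_succ, add_smul, one_smul, add_comm]

lemma evalFrom_repK {σ : Type*} (M : DFA (Alpha r m) σ) {p : σ} {y : Word r m}
    (hy : M.evalFrom p y = p) (k : ℕ) : M.evalFrom p (repK y k) = p := by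
  induction k with
  | zero => rfl
  | succ k ih => rw [repK_succ, DFA.evalFrom_of_append, hy, ih]

end RepK

section Recession

open Filter Topology

variable {m : ℕ}

/-- If `g` is an asymptotic direction of `S`, it is a recession direction of
`closure (convexHull ℝ S)`. -/
lemma recession_dir {S : Set (Fin m → ℝ)} {d : ℕ → Fin m → ℝ} {μ : ℕ → ℝ}
    {gv : Fin m → ℝ}
    (hdS : ∀ k, d k ∈ S) (hμ : ∀ k, 0 ≤ μ k)
    (hμ0 : Tendsto μ atTop (nhds 0))
    (hlim : Tendsto (fun k => μ k • d k) atTop (nhds gv)) :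
    ∀ c : ℝ, 0 ≤ c → ∀ x ∈ closure (convexHull ℝ S), x + c • gv ∈ closure (convexHull ℝ S) := by
  intro c hc
  have key : ∀ x ∈ convexHull ℝ S, x + c • gv ∈ closure (convexHull ℝ S) := by
    intro x hx
    have hcmul : Tendsto (fun k => c * μ k) atTop (nhds 0) := by
      simpa using hμ0.const_mul c
    have hev : ∀ᶠ k in atTop, c * μ k < 1 :=
      hcmul.eventually_lt_const (by norm_num : (0:ℝ) < 1)
    have hmem : ∀ᶠ k in atTop, (1 - c * μ k) • x + (c * μ k) • d k ∈ convexHull ℝ S := by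
      filter_upwards [hev] with k hk
      exact (convex_convexHull ℝ S) hx (subset_convexHull ℝ S (hdS k))
        (by linarith) (mul_nonneg hc (hμ k)) (by ring)
    have hq : Tendsto (fun k => (1 - c * μ k) • x + (c * μ k) • d k) atTop
        (nhds (x + c • gv)) := by
      have hid : ∀ k, (1 - c * μ k) • x + (c * μ k) • d k
          = x + c • (μ k • d k) - (c * μ k) • x := by
        intro k
        rw [smul_smul]
        module
      simp only [hid]
      have h1 : Tendsto (fun k => x + c • (μ k • d k)) atTop (nhds (x + c • gv)) :=
        tendsto_const_nhds.add (hlim.const_smul c)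
      have h2 : Tendsto (fun k => (c * μ k) • x) atTop (nhds ((0:ℝ) • x)) :=
        hcmul.smul_const x
      have := h1.sub h2
      simpa using this
    exact mem_closure_of_tendsto hq hmem
  intro x hx
  have hcont : Continuous (fun y : Fin m → ℝ => y + c • gv) := continuous_id.add continuous_const
  have := map_mem_closure hcont hx (fun y hy => key y hy)
  simpa [closure_closure] using this

/-- The ray of a valid pumping pair is a recession direction. -/
lemma pair_recession_dir {r : ℕ} (hr : 2 ≤ r) {σ : Type*} (M : DFA (Alpha r m) σ)
    (L : Set (Word r m)) (hML : M.accepts = L)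
    {p : σ} {w0 y z : Word r m}
    (hw0 : M.evalFrom M.start w0 = p) (hyloop : M.evalFrom p y = p) (hy : y ≠ [])
    (hz : M.evalFrom p z ∈ M.accept) :
    ∀ c : ℝ, 0 ≤ c → ∀ x ∈ closure (convexHull ℝ (rhoSet r m L)),
      x + c • hvec r m y z ∈ closure (convexHull ℝ (rhoSet r m L)) := by
  set R : ℝ := (r:ℝ) ^ y.length with hR
  have hR1 : 1 < R := one_lt_pow_len hr hy
  have hR0 : (0:ℝ) < R := lt_trans one_pos hR1
  set a : ℝ := (r:ℝ) ^ w0.length with ha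
  have ha0 : (0:ℝ) < a := by positivity
  set d : ℕ → Fin m → ℝ := fun k => rho r m (w0 ++ (repK y k ++ z)) with hd
  set μ : ℕ → ℝ := fun k => a⁻¹ * (R⁻¹)^k with hμdef
  have hdS : ∀ k, d k ∈ rhoSet r m L := by
    intro k
    refine ⟨w0 ++ (repK y k ++ z), ?_, rfl⟩
    rw [← hML]
    show M.evalFrom M.start _ ∈ M.accept
    rw [DFA.evalFrom_of_append, hw0, DFA.evalFrom_of_append, evalFrom_repK M hyloop]
    exact hz
  have hμpos : ∀ k, 0 ≤ μ k := by
    intro k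
    have : (0:ℝ) < R⁻¹ := inv_pos.2 hR0
    positivity
  have hRinv1 : R⁻¹ < 1 := inv_lt_one_of_one_lt₀ hR1
  have hRinv0 : (0:ℝ) ≤ R⁻¹ := le_of_lt (inv_pos.2 hR0)
  have hpow0 : Tendsto (fun k => (R⁻¹)^k) atTop (nhds 0) :=
    tendsto_pow_atTop_nhds_zero_of_lt_one hRinv0 hRinv1
  have hμ0 : Tendsto μ atTop (nhds 0) := by
    have := hpow0.const_mul a⁻¹
    simpa [hμdef] using this
  have hdk : ∀ k, d k = rho r m w0
      + (a * ∑ i ∈ Finset.range k, R ^ i) • rho r m y + (a * R ^ k) • rho r m z := by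
    intro k
    show rho r m (w0 ++ (repK y k ++ z)) = _
    rw [rho_append, rho_append, rho_repK]
    rw [length_repK, mul_comm k y.length, pow_mul]
    rw [smul_add, smul_smul, smul_smul, ← hR, ← ha, add_assoc]
  have hscal1 : ∀ k, μ k * (a * ∑ i ∈ Finset.range k, R ^ i)
      = (1 - (R⁻¹)^k) * (R - 1)⁻¹ := by
    intro k
    rw [geom_sum_eq (ne_of_gt hR1)]
    rw [hμdef]
    have h1 : R - 1 ≠ 0 := ne_of_gt (by linarith)
    have h2 : (R:ℝ) ≠ 0 := ne_of_gt hR0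
    have h3 : a ≠ 0 := ne_of_gt ha0
    have h4 : R ^ k * R⁻¹ ^ k = 1 := by rw [← mul_pow, mul_inv_cancel₀ h2, one_pow]
    field_simp
    ring_nf
    rw [h4]
  have hscal2 : ∀ k, μ k * (a * R ^ k) = 1 := by
    intro k
    rw [hμdef]
    have h2 : (R:ℝ) ≠ 0 := ne_of_gt hR0
    have h3 : a ≠ 0 := ne_of_gt ha0
    field_simp
    rw [← mul_pow, one_div, inv_mul_cancel₀ h2, one_pow]
  have hlim : Tendsto (fun k => μ k • d k) atTop (nhds (hvec r m y z)) := by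
    have hid : ∀ k, μ k • d k = μ k • rho r m w0
        + ((1 - (R⁻¹)^k) * (R - 1)⁻¹) • rho r m y + rho r m z := by
      intro k
      rw [hdk k, smul_add, smul_add, smul_smul, smul_smul, hscal1, hscal2, one_smul]
    simp only [hid]
    have h1 : Tendsto (fun k => μ k • rho r m w0) atTop (nhds ((0:ℝ) • rho r m w0)) :=
      hμ0.smul_const _
    have h2 : Tendsto (fun k => ((1 - (R⁻¹)^k) * (R - 1)⁻¹) • rho r m y) atTop
        (nhds (((1 - (0:ℝ)) * (R - 1)⁻¹) • rho r m y)) := by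
      exact (((tendsto_const_nhds (x := (1:ℝ))).sub hpow0).mul tendsto_const_nhds).smul_const _
    have h3 : Tendsto (fun _ : ℕ => rho r m z) atTop (nhds (rho r m z)) := tendsto_const_nhds
    have := (h1.add h2).add h3
    have hval : (0:ℝ) • rho r m w0 + ((1 - (0:ℝ)) * (R - 1)⁻¹) • rho r m y + rho r m z
        = hvec r m y z := by
      rw [zero_smul, zero_add]
      unfold hvec
      rw [hR]
      norm_num
    rwa [hval] at this
  exact recession_dir hdS hμpos hμ0 hlim

end Recession

section FGGeneric

variable {m : ℕ}

/-- Nonnegative combinations of the rays `gv`. -/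
def coneSet {q : ℕ} (gv : Fin q → Fin m → ℝ) : Set (Fin m → ℝ) :=
  {v | ∃ t : Fin q → ℝ, (∀ j, 0 ≤ t j) ∧ v = ∑ j, t j • gv j}

/-- Convex combinations of `fv` plus nonnegative combinations of `gv`. -/
def fgSet {pN q : ℕ} (fv : Fin pN → Fin m → ℝ) (gv : Fin q → Fin m → ℝ) :
    Set (Fin m → ℝ) :=
  {x | ∃ s : Fin pN → ℝ, ∃ t : Fin q → ℝ, (∀ i, 0 ≤ s i) ∧ (∀ j, 0 ≤ t j) ∧
    (∑ i, s i) = 1 ∧ x = (∑ i, s i • fv i) + ∑ j, t j • gv j}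

variable {pN q : ℕ} {fv : Fin pN → Fin m → ℝ} {gv : Fin q → Fin m → ℝ}

lemma coneSet_add {u v : Fin m → ℝ} (hu : u ∈ coneSet gv) (hv : v ∈ coneSet gv) :
    u + v ∈ coneSet gv := by
  obtain ⟨t1, ht1, rfl⟩ := hu
  obtain ⟨t2, ht2, rfl⟩ := hv
  refine ⟨fun j => t1 j + t2 j, fun j => add_nonneg (ht1 j) (ht2 j), ?_⟩
  rw [← Finset.sum_add_distrib]
  congr 1; funext j; rw [add_smul]

lemma coneSet_smul {c : ℝ} (hc : 0 ≤ c) {v : Fin m → ℝ} (hv : v ∈ coneSet gv) :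
    c • v ∈ coneSet gv := by
  obtain ⟨t, ht, rfl⟩ := hv
  refine ⟨fun j => c * t j, fun j => mul_nonneg hc (ht j), ?_⟩
  rw [Finset.smul_sum]
  congr 1; funext j; rw [smul_smul]

lemma coneSet_gen (j : Fin q) : gv j ∈ coneSet gv := by
  classical
  refine ⟨fun j' => if j' = j then 1 else 0, fun j' => by positivity, ?_⟩
  simp [ite_smul]

lemma fgSet_add_cone {x v : Fin m → ℝ} (hx : x ∈ fgSet fv gv) (hv : v ∈ coneSet gv) :
    x + v ∈ fgSet fv gv := by
  obtain ⟨s, t1, hs, ht1, hsum, rfl⟩ := hx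
  obtain ⟨t2, ht2, rfl⟩ := hv
  refine ⟨s, fun j => t1 j + t2 j, hs, fun j => add_nonneg (ht1 j) (ht2 j), hsum, ?_⟩
  rw [add_assoc, ← Finset.sum_add_distrib]
  congr 2; funext j; rw [add_smul]

lemma fgSet_convex : Convex ℝ (fgSet fv gv) := by
  rintro x ⟨s1, t1, hs1, ht1, hsum1, rfl⟩ y ⟨s2, t2, hs2, ht2, hsum2, rfl⟩ α β hα hβ hαβ
  refine ⟨fun i => α * s1 i + β * s2 i, fun j => α * t1 j + β * t2 j,
    fun i => add_nonneg (mul_nonneg hα (hs1 i)) (mul_nonneg hβ (hs2 i)),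
    fun j => add_nonneg (mul_nonneg hα (ht1 j)) (mul_nonneg hβ (ht2 j)), ?_, ?_⟩
  · rw [Finset.sum_add_distrib, ← Finset.mul_sum, ← Finset.mul_sum, hsum1, hsum2]
    simpa using hαβ
  · simp only [smul_add, Finset.smul_sum, smul_smul, add_smul, Finset.sum_add_distrib]
    abel

/-- The fg-set is the projection of a polyhedron, hence (by FM) a polyhedron. -/
lemma fgSet_eq_rows {m pN q : ℕ} (fv : Fin pN → Fin m → ℝ) (gv : Fin q → Fin m → ℝ) :
    ∃ (kk : ℕ) (A : Fin kk → Fin m → ℝ) (B : Fin kk → ℝ),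
      fgSet fv gv = {x : Fin m → ℝ | ∀ j, (∑ p, A j p * x p) + B j ≤ 0} := by
  classical
  set ι : Type := Fin m ⊕ (Fin m ⊕ (Bool ⊕ Fin (pN + q))) with hι
  set arow : ι → Fin m → ℝ := fun i => match i with
    | .inl p => fun p' => if p' = p then 1 else 0
    | .inr (.inl p) => fun p' => if p' = p then -1 else 0
    | .inr (.inr _) => 0 with harow
  set brow : ι → ℝ := fun i => match i with
    | .inl _ => 0
    | .inr (.inl _) => 0
    | .inr (.inr (.inl bb)) => if bb then -1 else 1
    | .inr (.inr (.inr _)) => 0 with hbrow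
  set drow : ι → Fin (pN + q) → ℝ := fun i => match i with
    | .inl p => Fin.append (fun i' => -(fv i' p)) (fun j => -(gv j p))
    | .inr (.inl p) => Fin.append (fun i' => fv i' p) (fun j => gv j p)
    | .inr (.inr (.inl bb)) =>
        if bb then Fin.append (fun _ => 1) (fun _ => 0)
        else Fin.append (fun _ => -1) (fun _ => 0)
    | .inr (.inr (.inr k)) => fun k' => if k' = k then -1 else 0 with hdrow
  obtain ⟨kk, A, B, hAB⟩ := fm_elim (m := m) (pN + q) ι inferInstance arow brow drow
  refine ⟨kk, A, B, ?_⟩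
  rw [← hAB]
  ext x
  simp only [Set.mem_setOf_eq, fgSet]
  have hsum_ite : ∀ (v : Fin m → ℝ) (p0 : Fin m),
      (∑ p', (if p' = p0 then (1:ℝ) else 0) * v p') = v p0 := by
    intro v p0
    simp [ite_mul]
  have hsum_ite_neg : ∀ (v : Fin m → ℝ) (p0 : Fin m),
      (∑ p', (if p' = p0 then (-1:ℝ) else 0) * v p') = -(v p0) := by
    intro v p0
    simp [ite_mul]
  have happ : ∀ (p0 : Fin m) (s : Fin pN → ℝ) (t : Fin q → ℝ),
      ((∑ i, s i • fv i) + ∑ j, t j • gv j) p0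
        = (∑ i, s i * fv i p0) + ∑ j, t j * gv j p0 := by
    intro p0 s t
    simp [Finset.sum_apply]
  constructor
  · rintro ⟨s, t, hs, ht, hsum, rfl⟩
    refine ⟨Fin.append s t, ?_⟩
    rintro (p | (p | (bb | k)))
    · simp only [harow, hbrow, hdrow]
      rw [hsum_ite, happ p s t, Fin.sum_univ_add]
      simp only [Fin.append_left, Fin.append_right]
      have : (∑ i, -fv i p * s i) = -(∑ i, s i * fv i p) := by
        rw [← Finset.sum_neg_distrib]; congr 1; funext i; ring
      have h2 : (∑ j, -gv j p * t j) = -(∑ j, t j * gv j p) := by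
        rw [← Finset.sum_neg_distrib]; congr 1; funext j; ring
      rw [this, h2]; ring_nf; simp
    · simp only [harow, hbrow, hdrow]
      rw [hsum_ite_neg, happ p s t, Fin.sum_univ_add]
      simp only [Fin.append_left, Fin.append_right]
      have : (∑ i, fv i p * s i) = (∑ i, s i * fv i p) := by
        congr 1; funext i; ring
      have h2 : (∑ j, gv j p * t j) = (∑ j, t j * gv j p) := by
        congr 1; funext j; ring
      rw [this, h2]; ring_nf; simp
    · cases bb
      · simp only [harow, hbrow, hdrow, if_false, Bool.false_eq_true]
        rw [Fin.sum_univ_add]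
        simp only [Fin.append_left, Fin.append_right]
        have hn : (∑ i, (-1 : ℝ) * s i) = -(∑ i, s i) := by
          rw [← Finset.sum_neg_distrib]; congr 1; funext i; ring
        simp only [neg_mul, one_mul, zero_mul, Finset.sum_const_zero, add_zero]
        have hn' : (∑ i, -s i) = -(∑ i, s i) := Finset.sum_neg_distrib _
        rw [hn', hsum]
        norm_num
      · simp only [harow, hbrow, hdrow, if_true]
        rw [Fin.sum_univ_add]
        simp only [Fin.append_left, Fin.append_right]
        simp [hsum]
    · simp only [harow, hbrow, hdrow]
      have : (∑ k', (if k' = k then (-1:ℝ) else 0) * (Fin.append s t) k')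
          = -((Fin.append s t) k) := by
        simp [ite_mul]
      rw [this]
      simp only [Pi.zero_apply, zero_mul, Finset.sum_const_zero, zero_add, add_zero]
      have : 0 ≤ (Fin.append s t) k := by
        induction k using Fin.addCases with
        | left i => rw [Fin.append_left]; exact hs i
        | right j => rw [Fin.append_right]; exact ht j
      linarith
  · rintro ⟨u, hu⟩
    set s : Fin pN → ℝ := fun i => u (Fin.castAdd q i) with hsdef
    set t : Fin q → ℝ := fun j => u (Fin.natAdd pN j) with htdef
    have hnon : ∀ k, 0 ≤ u k := by
      intro k
      have := hu (.inr (.inr (.inr k)))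
      simp only [harow, hbrow, hdrow, Pi.zero_apply, zero_mul, Finset.sum_const_zero,
        zero_add, add_zero] at this
      have h2 : (∑ k', (if k' = k then (-1:ℝ) else 0) * u k') = -(u k) := by
        simp [ite_mul]
      rw [h2] at this
      linarith
    have hsum1 : (∑ i, s i) - 1 ≤ 0 := by
      have := hu (.inr (.inr (.inl true)))
      simp only [harow, hbrow, hdrow, if_true, Pi.zero_apply, zero_mul,
        Finset.sum_const_zero, zero_add] at this
      rw [Fin.sum_univ_add] at this
      simp only [Fin.append_left, Fin.append_right] at this
      simp only [one_mul, zero_mul, Finset.sum_const_zero, add_zero] at this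
      linarith
    have hsum2 : 1 - (∑ i, s i) ≤ 0 := by
      have := hu (.inr (.inr (.inl false)))
      simp only [harow, hbrow, hdrow, if_false, Bool.false_eq_true, Pi.zero_apply, zero_mul,
        Finset.sum_const_zero, zero_add] at this
      rw [Fin.sum_univ_add] at this
      simp only [Fin.append_left, Fin.append_right] at this
      simp only [neg_mul, one_mul, zero_mul, Finset.sum_const_zero, add_zero] at this
      have hn : (∑ i : Fin pN, -u (Fin.castAdd q i)) = -(∑ i, s i) := by
        rw [Finset.sum_neg_distrib]
      rw [hn] at this
      linarith
    have hcoord : ∀ p, x p = (∑ i, s i * fv i p) + ∑ j, t j * gv j p := by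
      intro p
      have h1 := hu (.inl p)
      have h2 := hu (.inr (.inl p))
      simp only [harow, hbrow, hdrow] at h1 h2
      rw [hsum_ite, Fin.sum_univ_add] at h1
      rw [hsum_ite_neg, Fin.sum_univ_add] at h2
      simp only [Fin.append_left, Fin.append_right] at h1 h2
      have e1 : (∑ i, -fv i p * u (Fin.castAdd q i)) = -(∑ i, s i * fv i p) := by
        rw [← Finset.sum_neg_distrib]; congr 1; funext i; rw [hsdef]; ring
      have e2 : (∑ j, -gv j p * u (Fin.natAdd pN j)) = -(∑ j, t j * gv j p) := by
        rw [← Finset.sum_neg_distrib]; congr 1; funext j; rw [htdef]; ring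
      have e3 : (∑ i, fv i p * u (Fin.castAdd q i)) = (∑ i, s i * fv i p) := by
        congr 1; funext i; rw [hsdef]; ring
      have e4 : (∑ j, gv j p * u (Fin.natAdd pN j)) = (∑ j, t j * gv j p) := by
        congr 1; funext j; rw [htdef]; ring
      rw [e1, e2] at h1
      rw [e3, e4] at h2
      linarith
    refine ⟨s, t, fun i => hnon _, fun j => hnon _, by linarith, ?_⟩
    funext p
    rw [hcoord p]
    simp [Finset.sum_apply]

lemma enum_of_finite {α : Type*} {S : Set α} (h : S.Finite) :
    ∃ (n : ℕ) (f : Fin n → α), ∀ x, x ∈ S ↔ ∃ i, f i = x := by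
  classical
  obtain ⟨F, rfl⟩ : ∃ F : Finset α, ↑F = S := ⟨h.toFinset, h.coe_toFinset⟩
  refine ⟨F.toList.length, fun i => F.toList.get i, fun x => ?_⟩
  rw [show (x ∈ (↑F : Set α)) = (x ∈ F) from rfl, ← Finset.mem_toList, List.mem_iff_get]

theorem closure_convexHull_regular_eq_iInter_halfspaces'
    (r m : ℕ) (hr : 2 ≤ r)
    (L : Set (Word r m)) (hL : Language.IsRegular L) :
    ∃ (k : ℕ) (α : Fin k → (Fin m → ℝ)) (c : Fin k → ℝ),
      closure (convexHull ℝ (rhoSet r m L)) =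
        ⋂ j : Fin k, {x : Fin m → ℝ | (∑ i, α j i * x i) + c j ≥ 0} := by
  classical
  obtain ⟨σS, instF, M, hML⟩ := hL
  haveI := instF
  set N := Fintype.card σS with hNdef
  have hN1 : 0 < N := Fintype.card_pos_iff.2 ⟨M.start⟩
  -- short accepted words
  have hSFfin : {w : Word r m | M.eval w ∈ M.accept ∧ w.length < N}.Finite :=
    Set.Finite.subset (List.finite_length_lt (Alpha r m) N) (fun w hw => hw.2)
  obtain ⟨pN, f0, hf0⟩ := enum_of_finite hSFfin
  set fvec : Fin pN → (Fin m → ℝ) := fun i => rho r m (f0 i) with hfvec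
  -- short valid pumping pairs
  have hSPfin : {yz : Word r m × Word r m |
      (∃ p : σS, (∃ w0, M.evalFrom M.start w0 = p) ∧ M.evalFrom p yz.1 = p ∧
        M.evalFrom p yz.2 ∈ M.accept) ∧ yz.1 ≠ [] ∧ yz.1.length ≤ N ∧ yz.2.length < N}.Finite := by
    refine Set.Finite.subset
      ((List.finite_length_le (Alpha r m) N).prod (List.finite_length_lt (Alpha r m) N)) ?_
    rintro ⟨y, z⟩ ⟨_, _, hy, hz⟩
    exact ⟨hy, hz⟩
  obtain ⟨q, g0, hg0⟩ := enum_of_finite hSPfin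
  set gvec : Fin q → (Fin m → ℝ) := fun j => hvec r m (g0 j).1 (g0 j).2 with hgvec
  -- the cone over the rays
  have hconeGen : ∀ (y z : Word r m),
      (∃ p : σS, (∃ w0, M.evalFrom M.start w0 = p) ∧ M.evalFrom p y = p ∧
        M.evalFrom p z ∈ M.accept) → y ≠ [] → y.length ≤ N → z.length < N →
      hvec r m y z ∈ coneSet gvec := by
    intro y z hp hy hyN hzN
    obtain ⟨j, hj⟩ := (hg0 (y, z)).1 ⟨hp, hy, hyN, hzN⟩
    have : gvec j = hvec r m y z := by simp only [hgvec, hj]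
    rw [← this]
    exact coneSet_gen j
  -- Lemma Z : pairs with short loop part
  have Zlem : ∀ (n : ℕ) (z y : Word r m) (p : σS), z.length ≤ n →
      (∃ w0, M.evalFrom M.start w0 = p) → M.evalFrom p y = p →
      M.evalFrom p z ∈ M.accept → y ≠ [] → y.length ≤ N →
      hvec r m y z ∈ coneSet gvec := by
    intro n
    induction n with
    | zero =>
      intro z y p hzn hreach hloop hacc hy hyN
      refine hconeGen y z ⟨p, hreach, hloop, hacc⟩ hy hyN (by omega)
    | succ n ih =>
      intro z y p hzn hreach hloop hacc hy hyN
      by_cases hzN : z.length < N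
      · exact hconeGen y z ⟨p, hreach, hloop, hacc⟩ hy hyN hzN
      · push_neg at hzN
        obtain ⟨q', za, zb, zc, hzeq, hlen2, hbne, he1, he2, he3⟩ :=
          M.evalFrom_split (s := p) (t := M.evalFrom p z) hzN rfl
        subst hzeq
        have hlb : 0 < zb.length := List.length_pos_iff.2 hbne
        simp only [List.length_append] at hzn hzN
        rw [List.append_assoc]
        rw [hvec_split_z hr y za zb zc hbne]
        refine coneSet_add ?_ (coneSet_smul ?_ ?_)
        · -- (y, za ++ zc)
          refine ih (za ++ zc) y p ?_ hreach hloop ?_ hy hyN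
          · simp only [List.length_append]
            omega
          · rw [DFA.evalFrom_of_append, he1, he3]
            exact hacc
        · have := pow_len_sub_one_pos (y := zb) hr hbne
          have h0r : (0:ℝ) ≤ (r:ℝ) ^ za.length := by positivity
          exact mul_nonneg h0r (le_of_lt this)
        · -- (zb, zc)
          obtain ⟨w0, hw0⟩ := hreach
          refine ih zc zb q' ?_ ⟨w0 ++ za, ?_⟩ he2 ?_ hbne (by omega)
          · omega
          · rw [DFA.evalFrom_of_append, hw0, he1]
          · rw [he3]
            exact hacc
  -- Lemma Y : general pairs
  have Ylem : ∀ (n : ℕ) (y z : Word r m) (p : σS), y.length ≤ n →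
      (∃ w0, M.evalFrom M.start w0 = p) → M.evalFrom p y = p →
      M.evalFrom p z ∈ M.accept → y ≠ [] →
      hvec r m y z ∈ coneSet gvec := by
    intro n
    induction n with
    | zero =>
      intro y z p hyn hreach hloop hacc hy
      exact absurd (List.length_pos_iff.2 hy) (by omega)
    | succ n ih =>
      intro y z p hyn hreach hloop hacc hy
      by_cases hyN : y.length ≤ N
      · exact Zlem z.length z y p le_rfl hreach hloop hacc hy hyN
      · push_neg at hyN
        obtain ⟨s', ya, yb, yc, hyeq, hlen2, hbne, he1, he2, he3⟩ :=
          M.evalFrom_split (s := p) (t := p) (by omega) hloop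
        subst hyeq
        have hlb : 0 < yb.length := List.length_pos_iff.2 hbne
        simp only [List.length_append] at hyn hyN
        have hlc : 0 < yc.length := by omega
        have hcne : yc ≠ [] := by
          intro h; rw [h] at hlc; simp at hlc
        have hacne : ya ++ yc ≠ [] := by
          intro h
          exact hcne (List.append_eq_nil_iff.mp h).2
        have habcne : ya ++ (yb ++ yc) ≠ [] := by
          intro h
          exact hbne (List.append_eq_nil_iff.mp (List.append_eq_nil_iff.mp h).2).1
        have E := hvec_split_y hr ya yb yc z hbne hacne habcne
        have hCpos := pow_len_sub_one_pos (y := ya ++ (yb ++ yc)) hr habcne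
        have hEinv : hvec r m (ya ++ (yb ++ yc)) z
            = ((r:ℝ) ^ (ya ++ (yb ++ yc)).length - 1)⁻¹ •
              (((r : ℝ) ^ (ya ++ yc).length - 1) • hvec r m (ya ++ yc) z
                + ((r : ℝ) ^ ya.length * ((r : ℝ) ^ yb.length - 1)) •
                    hvec r m yb (yc ++ z)) := by
          rw [← E, smul_smul, inv_mul_cancel₀ (ne_of_gt hCpos), one_smul]
        rw [List.append_assoc, hEinv]
        refine coneSet_smul (le_of_lt (inv_pos.2 hCpos)) (coneSet_add
          (coneSet_smul ?_ ?_) (coneSet_smul ?_ ?_))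
        · have := pow_len_sub_one_pos (y := ya ++ yc) hr hacne
          exact le_of_lt this
        · -- (ya ++ yc, z)
          refine ih (ya ++ yc) z p ?_ hreach ?_ hacc hacne
          · simp only [List.length_append]
            omega
          · rw [DFA.evalFrom_of_append, he1, he3]
        · have := pow_len_sub_one_pos (y := yb) hr hbne
          have h0r : (0:ℝ) ≤ (r:ℝ) ^ ya.length := by positivity
          exact mul_nonneg h0r (le_of_lt this)
        · -- (yb, yc ++ z)
          obtain ⟨w0, hw0⟩ := hreach
          refine Zlem (yc ++ z).length (yc ++ z) yb s' le_rfl ⟨w0 ++ ya, ?_⟩ he2 ?_ hbne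
            (by omega)
          · rw [DFA.evalFrom_of_append, hw0, he1]
          · rw [DFA.evalFrom_of_append, he3]
            exact hacc
  -- every accepted word lands in the fg-set
  have mainFG : ∀ (n : ℕ) (w : Word r m), w.length ≤ n → M.eval w ∈ M.accept →
      rho r m w ∈ fgSet fvec gvec := by
    have hgen : ∀ (w : Word r m), M.eval w ∈ M.accept → w.length < N →
        rho r m w ∈ fgSet fvec gvec := by
      intro w hacc hwN
      obtain ⟨i, hi⟩ := (hf0 w).1 ⟨hacc, hwN⟩
      refine ⟨fun i' => if i' = i then 1 else 0, fun _ => 0, fun i' => by positivity,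
        fun _ => le_rfl, by simp, ?_⟩
      simp only [ite_smul, one_smul, zero_smul, Finset.sum_ite_eq']
      simp [hfvec, hi]
    intro n
    induction n with
    | zero =>
      intro w hwn hacc
      exact hgen w hacc (by omega)
    | succ n ih =>
      intro w hwn hacc
      by_cases hwN : w.length < N
      · exact hgen w hacc hwN
      · push_neg at hwN
        obtain ⟨p, wa, wb, wc, hweq, hlen2, hbne, he1, he2, he3⟩ :=
          M.evalFrom_split (s := M.start) (t := M.eval w) hwN rfl
        subst hweq
        have hlb : 0 < wb.length := List.length_pos_iff.2 hbne
        have hshort : rho r m (wa ++ wc) ∈ fgSet fvec gvec := by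
          refine ih (wa ++ wc) ?_ ?_
          · simp only [List.length_append] at hwn ⊢
            omega
          · show M.evalFrom M.start (wa ++ wc) ∈ M.accept
            rw [DFA.evalFrom_of_append, he1, he3]
            exact hacc
        have hray : hvec r m wb wc ∈ coneSet gvec := by
          refine Ylem wb.length wb wc p le_rfl ⟨wa, he1⟩ he2 ?_ hbne
          rw [he3]
          exact hacc
        have hid : rho r m ((wa ++ wb) ++ wc)
            = rho r m (wa ++ wc)
              + ((r:ℝ) ^ wa.length * ((r:ℝ) ^ wb.length - 1)) • hvec r m wb wc := by
          rw [← smul_smul, smul_hvec hr hbne]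
          rw [List.append_assoc, rho_append wa (wb ++ wc), rho_append wb wc,
            rho_append wa wc]
          module
        rw [hid]
        refine fgSet_add_cone hshort (coneSet_smul ?_ hray)
        have := pow_len_sub_one_pos (y := wb) hr hbne
        have h0r : (0:ℝ) ≤ (r:ℝ) ^ wa.length := by positivity
        exact mul_nonneg h0r (le_of_lt this)
  -- rhoSet ⊆ fgSet
  have hSsub : rhoSet r m L ⊆ fgSet fvec gvec := by
    rintro x ⟨w, hwL, rfl⟩
    have : w ∈ M.accepts := by rw [hML]; exact hwL
    exact mainFG w.length w le_rfl this
  -- fgSet ⊆ closure (convexHull ℝ (rhoSet r m L))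
  have hFGsub : fgSet fvec gvec ⊆ closure (convexHull ℝ (rhoSet r m L)) := by
    rintro x ⟨s, t, hs, ht, hsum, rfl⟩
    have hbase : (∑ i, s i • fvec i) ∈ convexHull ℝ (rhoSet r m L) := by
      refine Convex.sum_mem (convex_convexHull ℝ _) (fun i _ => hs i) hsum ?_
      intro i _
      refine subset_convexHull ℝ _ ⟨f0 i, ?_, rfl⟩
      have := ((hf0 (f0 i)).2 ⟨i, rfl⟩).1
      rw [← hML]
      exact this
    have hrays : ∀ (T : Finset (Fin q)) (x : Fin m → ℝ),
        x ∈ closure (convexHull ℝ (rhoSet r m L)) →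
        x + ∑ j ∈ T, t j • gvec j ∈ closure (convexHull ℝ (rhoSet r m L)) := by
      intro T
      induction T using Finset.induction_on with
      | empty => intro x hx; simpa using hx
      | @insert j T hj ihT =>
        intro x hx
        rw [Finset.sum_insert hj]
        have hrearr : x + (t j • gvec j + ∑ j' ∈ T, t j' • gvec j')
            = (x + ∑ j' ∈ T, t j' • gvec j') + t j • gvec j := by abel
        rw [hrearr]
        obtain ⟨⟨p, ⟨w0, hw0⟩, hloop, hacc⟩, hyne, _, _⟩ := (hg0 (g0 j)).2 ⟨j, rfl⟩
        exact pair_recession_dir hr M L hML hw0 hloop hyne hacc (t j) (ht j) _ (ihT x hx)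
    exact hrays Finset.univ _ (subset_closure hbase)
  -- the fg-set is a polyhedron
  obtain ⟨kk, A, B, hAB⟩ := fgSet_eq_rows fvec gvec
  have hPclosed : IsClosed {x : Fin m → ℝ | ∀ j, (∑ p, A j p * x p) + B j ≤ 0} := by
    have : {x : Fin m → ℝ | ∀ j, (∑ p, A j p * x p) + B j ≤ 0}
        = ⋂ j, {x : Fin m → ℝ | (∑ p, A j p * x p) + B j ≤ 0} := by
      ext x; simp [Set.mem_iInter]
    rw [this]
    refine isClosed_iInter (fun j => ?_)
    have hc : Continuous (fun x : Fin m → ℝ => (∑ p, A j p * x p) + B j) := by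
      refine Continuous.add ?_ continuous_const
      exact continuous_finset_sum _ (fun p _ => continuous_const.mul (continuous_apply p))
    exact isClosed_le hc continuous_const
  -- the chain of equalities
  have hmain : closure (convexHull ℝ (rhoSet r m L))
      = {x : Fin m → ℝ | ∀ j, (∑ p, A j p * x p) + B j ≤ 0} := by
    apply Set.Subset.antisymm
    · refine closure_minimal ?_ hPclosed
      refine (convexHull_min hSsub fgSet_convex).trans ?_
      rw [← hAB]
    · rw [← hAB]
      exact hFGsub
  refine ⟨kk, fun j => fun i => -(A j i), fun j => -(B j), ?_⟩
  rw [hmain]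
  ext x
  simp only [Set.mem_iInter, Set.mem_setOf_eq, ge_iff_le]
  constructor
  · intro h j
    have := h j
    have hn : (∑ i, -(A j i) * x i) = -(∑ i, A j i * x i) := by
      rw [← Finset.sum_neg_distrib]; congr 1; funext i; ring
    rw [hn]
    linarith
  · intro h j
    have := h j
    have hn : (∑ i, -(A j i) * x i) = -(∑ i, A j i * x i) := by
      rw [← Finset.sum_neg_distrib]; congr 1; funext i; ring
    rw [hn] at this
    linarith

/-- the closure of the convex hull of a regular set of integer vectors
is a finite intersection of closed half-spaces. -/
theorem closure_convexHull_regular_eq_iInter_halfspaces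
    (r m : ℕ) (hr : 2 ≤ r) (hm : 1 ≤ m)
    (L : Set (Word r m)) (hL : Language.IsRegular L) :
    ∃ (k : ℕ) (α : Fin k → (Fin m → ℝ)) (c : Fin k → ℝ),
      closure (convexHull ℝ (rhoSet r m L)) =
        ⋂ j : Fin k, {x : Fin m → ℝ | (∑ i, α j i * x i) + c j ≥ 0} := by
  exact closure_convexHull_regular_eq_iInter_halfspaces' r m hr L hL
end FGGeneric
end RhoAlg
end

section
/- Let L ⊆ Σ_{r^m}* be a regular language. Then there exists a finite set of rays R ⊆ ℝ^m × ℝ₊ such that cl(conv(ρ(L))) = P(R), i.e., the closure of the convex hull of ρ(L) is represented by a finite set of rays. -/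
/-! ### Auxiliary development -/

namespace CHR

open Pointwise

lemma rho_cons (r m : ℕ) (b) (w : Word r m) :
    rho r m (b :: w) = (fun j => (b j : ℝ)) + (r : ℝ) • rho r m w := rfl

lemma rho_append (r m : ℕ) (u v : Word r m) :
    rho r m (u ++ v) = rho r m u + (r : ℝ) ^ u.length • rho r m v := by
  induction u with
  | nil => simp [rho]
  | cons a u ih =>
      simp only [List.cons_append, rho_cons, ih, List.length_cons, pow_succ]
      module

lemma rho_nonneg (r m : ℕ) (σ : Word r m) (j : Fin m) : 0 ≤ rho r m σ j := by
  induction σ with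
  | nil => simp [rho]
  | cons a u ih =>
      simp only [rho_cons, Pi.add_apply, Pi.smul_apply, smul_eq_mul]
      positivity

/-- The direction vector `ρ(τ)/(r^|τ|-1) + ρ(β)`. -/
noncomputable def dvec (r m : ℕ) (τ β : Word r m) : Fin m → ℝ :=
  ((r : ℝ) ^ τ.length - 1)⁻¹ • rho r m τ + rho r m β

section Algebra

variable {r m : ℕ}

lemma pow_sub_one_pos (hr : 2 ≤ r) {t : ℕ} (ht : t ≠ 0) : 0 < (r : ℝ) ^ t - 1 := by
  have h : (1:ℝ) < (r:ℝ) := by exact_mod_cast hr.trans_lt' one_lt_two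
  have := one_lt_pow₀ h ht
  linarith

lemma dvec_nonneg (hr : 2 ≤ r) (τ β : Word r m) (j : Fin m) : 0 ≤ dvec r m τ β j := by
  have h1 : (0:ℝ) ≤ ((r : ℝ) ^ τ.length - 1)⁻¹ := by
    rcases eq_or_ne τ.length 0 with h | h
    · simp [h]
    · exact (inv_nonneg).2 (pow_sub_one_pos hr h).le
  simp only [dvec, Pi.add_apply, Pi.smul_apply, smul_eq_mul]
  have := rho_nonneg r m τ j
  have := rho_nonneg r m β j
  positivity

lemma pump_identity (hr : 2 ≤ r) (α τ β : Word r m) (hτ : τ ≠ []) :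
    rho r m (α ++ (τ ++ β)) = rho r m (α ++ β) +
      ((r : ℝ) ^ α.length * ((r : ℝ) ^ τ.length - 1)) • dvec r m τ β := by
  have h0 : ((r:ℝ) ^ τ.length - 1) ≠ 0 :=
    (pow_sub_one_pos hr (by simpa using hτ)).ne'
  rw [rho_append, rho_append, rho_append]
  unfold dvec
  match_scalars <;> field_simp <;> ring

lemma dred_beta (hr : 2 ≤ r) (τ β₁ b β₂ : Word r m) (hb : b ≠ []) :
    dvec r m τ (β₁ ++ (b ++ β₂)) = dvec r m τ (β₁ ++ β₂) +
      ((r : ℝ) ^ β₁.length * ((r : ℝ) ^ b.length - 1)) • dvec r m b β₂ := by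
  have h0 : ((r:ℝ) ^ b.length - 1) ≠ 0 :=
    (pow_sub_one_pos hr (by simpa using hb)).ne'
  unfold dvec
  rw [rho_append, rho_append, rho_append]
  match_scalars <;> field_simp <;> ring

lemma tau_core (x y z : ℝ) (hy : y - 1 ≠ 0) (hxz : x * z - 1 ≠ 0)
    (hxyz : x * y * z - 1 ≠ 0) (u v w p : Fin m → ℝ) :
    (x * y * z - 1)⁻¹ • (u + x • v + (x * y) • w) + p =
      ((x * z - 1) / (x * y * z - 1)) • ((x * z - 1)⁻¹ • (u + x • w) + p) +
      ((x * (y - 1)) / (x * y * z - 1)) • ((y - 1)⁻¹ • v + (w + z • p)) := by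
  have hxyz' : x * z * y - 1 ≠ 0 := by rwa [mul_right_comm] at hxyz
  match_scalars <;> field_simp <;> ring

lemma dred_tau (hr : 2 ≤ r) (τ₁ b τ₂ β : Word r m) (hb : b ≠ []) (hτ : τ₂ ≠ []) :
    dvec r m (τ₁ ++ (b ++ τ₂)) β =
      (((r : ℝ) ^ (τ₁.length + τ₂.length) - 1) /
          ((r : ℝ) ^ (τ₁.length + b.length + τ₂.length) - 1)) • dvec r m (τ₁ ++ τ₂) β +
      (((r : ℝ) ^ τ₁.length * ((r : ℝ) ^ b.length - 1)) /
          ((r : ℝ) ^ (τ₁.length + b.length + τ₂.length) - 1)) • dvec r m b (τ₂ ++ β) := by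
  have h0 : ((r:ℝ) ^ b.length - 1) ≠ 0 :=
    (pow_sub_one_pos hr (by simpa using hb)).ne'
  have h1 : ((r:ℝ) ^ (τ₁.length + τ₂.length) - 1) ≠ 0 := by
    refine (pow_sub_one_pos hr ?_).ne'
    have : τ₂.length ≠ 0 := by simpa using hτ
    omega
  have h2 : ((r:ℝ) ^ (τ₁.length + b.length + τ₂.length) - 1) ≠ 0 := by
    refine (pow_sub_one_pos hr ?_).ne'
    have : τ₂.length ≠ 0 := by simpa using hτ
    omega
  have e1 : rho r m (τ₁ ++ (b ++ τ₂)) = rho r m τ₁ + (r:ℝ) ^ τ₁.length • rho r m b +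
      ((r:ℝ) ^ τ₁.length * (r:ℝ) ^ b.length) • rho r m τ₂ := by
    rw [rho_append, rho_append]; module
  have e2 : rho r m (τ₁ ++ τ₂) = rho r m τ₁ + (r:ℝ) ^ τ₁.length • rho r m τ₂ :=
    rho_append r m τ₁ τ₂
  have e3 : rho r m (τ₂ ++ β) = rho r m τ₂ + (r:ℝ) ^ τ₂.length • rho r m β :=
    rho_append r m τ₂ β
  unfold dvec
  rw [e1, e2, e3]
  simp only [List.length_append, pow_add]
  have := tau_core (m := m) ((r:ℝ) ^ τ₁.length) ((r:ℝ) ^ b.length) ((r:ℝ) ^ τ₂.length)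
    h0
    (by rw [pow_add] at h1; exact h1)
    (by rw [pow_add, pow_add] at h2; exact h2)
    (rho r m τ₁) (rho r m b) (rho r m τ₂) (rho r m β)
  convert this using 3 <;> ring_nf

lemma repK_succ {α : Type*} (σ : List α) (k : ℕ) :
    repK σ (k + 1) = σ ++ repK σ k := by
  simp [repK, List.replicate_succ]

lemma rho_repK (hr : 2 ≤ r) (τ : Word r m) (hτ : τ ≠ []) (k : ℕ) :
    rho r m (repK τ k) =
      ((r:ℝ) ^ (τ.length * k) - 1) • (((r : ℝ) ^ τ.length - 1)⁻¹ • rho r m τ) := by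
  have h0 : ((r:ℝ) ^ τ.length - 1) ≠ 0 :=
    (pow_sub_one_pos hr (by simpa using hτ)).ne'
  induction k with
  | zero => simp [repK, rho]
  | succ k ih =>
      rw [repK_succ, rho_append, ih, Nat.mul_succ, pow_add]
      match_scalars
      field_simp
      ring

lemma repK_length {α : Type*} (σ : List α) (k : ℕ) :
    (repK σ k).length = σ.length * k := by
  induction k with
  | zero => simp [repK]
  | succ k ih => rw [repK_succ, List.length_append, ih, Nat.mul_succ]; omega

end Algebra

/-! ### Cone membership helpers -/

section Cone

variable {m : ℕ}

lemma mem_coneOf_of_mem {R : Finset ((Fin m → ℝ) × ℝ)} {p} (hp : p ∈ R) : p ∈ coneOf R := by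
  refine ⟨fun q => if q = p then 1 else 0, fun q => by positivity, ?_⟩
  simp only [ite_smul, one_smul, zero_smul]
  rw [show (∑ x ∈ R, if x = p then x else 0) = ∑ x ∈ R, if x = p then id x else 0 from rfl,
    Finset.sum_ite_eq' R p id]
  simp [hp]

lemma coneOf_zero_mem (R : Finset ((Fin m → ℝ) × ℝ)) : (0 : (Fin m → ℝ) × ℝ) ∈ coneOf R :=
  ⟨fun _ => 0, fun _ => le_refl _, by simp⟩

lemma coneOf_add_mem {R : Finset ((Fin m → ℝ) × ℝ)} {x y} (hx : x ∈ coneOf R)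
    (hy : y ∈ coneOf R) : x + y ∈ coneOf R := by
  obtain ⟨t, ht, rfl⟩ := hx
  obtain ⟨s, hs, rfl⟩ := hy
  exact ⟨fun q => t q + s q, fun q => add_nonneg (ht q) (hs q), by
    rw [← Finset.sum_add_distrib]
    exact Finset.sum_congr rfl fun q _ => (add_smul _ _ _).symm⟩

lemma coneOf_smul_mem {R : Finset ((Fin m → ℝ) × ℝ)} {c : ℝ} {x} (hc : 0 ≤ c)
    (hx : x ∈ coneOf R) : c • x ∈ coneOf R := by
  obtain ⟨t, ht, rfl⟩ := hx
  exact ⟨fun q => c * t q, fun q => mul_nonneg hc (ht q), by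
    rw [Finset.smul_sum]
    exact Finset.sum_congr rfl fun q _ => (mul_smul _ _ _).symm⟩

end Cone


/-! ### Closedness of finitely generated nonnegative spans -/

lemma isClosed_nonnegSpan {m : ℕ} (G : Finset ((Fin m → ℝ) × ℝ))
    (hG : ∀ p ∈ G, ∀ j, 0 ≤ p.1 j) :
    IsClosed {y : Fin m → ℝ | ∃ μ : ((Fin m → ℝ) × ℝ) → ℝ,
      (∀ p, 0 ≤ μ p) ∧ y = ∑ p ∈ G, μ p • p.1} := by
  classical
  set G' := G.filter (fun p => p.1 ≠ 0) with hG'def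
  have hsub : G' ⊆ G := Finset.filter_subset _ _
  have hsumeq : ∀ μ : ((Fin m → ℝ) × ℝ) → ℝ,
      ∑ p ∈ G, μ p • p.1 = ∑ p ∈ G', μ p • p.1 := by
    intro μ
    refine (Finset.sum_filter_of_ne ?_).symm
    intro p hp hne h0
    exact hne (by rw [h0, smul_zero])
  have hset : {y : Fin m → ℝ | ∃ μ : ((Fin m → ℝ) × ℝ) → ℝ,
        (∀ p, 0 ≤ μ p) ∧ y = ∑ p ∈ G, μ p • p.1} =
      {y : Fin m → ℝ | ∃ μ : ((Fin m → ℝ) × ℝ) → ℝ,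
        (∀ p, 0 ≤ μ p) ∧ y = ∑ p ∈ G', μ p • p.1} := by
    ext y
    exact ⟨fun ⟨μ, h0, h⟩ => ⟨μ, h0, h.trans (hsumeq μ)⟩,
      fun ⟨μ, h0, h⟩ => ⟨μ, h0, h.trans (hsumeq μ).symm⟩⟩
  rw [hset]
  rcases Finset.eq_empty_or_nonempty G' with he | hne
  · have h0 : {y : Fin m → ℝ | ∃ μ : ((Fin m → ℝ) × ℝ) → ℝ,
        (∀ p, 0 ≤ μ p) ∧ y = ∑ p ∈ G', μ p • p.1} = {0} := by
      ext y
      simp only [he, Finset.sum_empty, Set.mem_setOf_eq, Set.mem_singleton_iff]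
      exact ⟨fun ⟨μ, _, h⟩ => h, fun h => ⟨0, fun _ => le_rfl, h⟩⟩
    rw [h0]
    exact isClosed_singleton
  · set f : (Fin m → ℝ) → ℝ := fun y => ∑ j, y j with hfdef
    have hfcont : Continuous f := continuous_finset_sum _ fun j _ => continuous_apply j
    have hflin : ∀ (μ : ((Fin m → ℝ) × ℝ) → ℝ),
        f (∑ p ∈ G', μ p • p.1) = ∑ p ∈ G', μ p * f p.1 := by
      intro μ
      simp only [hfdef, Finset.sum_apply, Pi.smul_apply, smul_eq_mul, Finset.mul_sum]
      exact Finset.sum_comm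
    have hfpos : ∀ p ∈ G', 0 < f p.1 := by
      intro p hp
      have hp0 : p.1 ≠ 0 := (Finset.mem_filter.1 hp).2
      have hpG := hG p (hsub hp)
      obtain ⟨j, hj⟩ : ∃ j, p.1 j ≠ 0 := by
        by_contra h; push_neg at h; exact hp0 (funext h)
      exact Finset.sum_pos' (fun i _ => hpG i)
        ⟨j, Finset.mem_univ j, (hpG j).lt_of_ne (Ne.symm hj)⟩
    set δ := G'.inf' hne (fun p => f p.1) with hδdef
    have hδ : 0 < δ := (Finset.lt_inf'_iff _).2 hfpos
    refine IsSeqClosed.isClosed ?_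
    intro u y hu huy
    choose μ hμ0 hμeq using hu
    have hfy : Filter.Tendsto (fun n => f (u n)) Filter.atTop (nhds (f y)) :=
      (hfcont.tendsto y).comp huy
    obtain ⟨C, hC⟩ := hfy.bddAbove_range
    have hCn : ∀ n, f (u n) ≤ C := fun n => hC (Set.mem_range_self n)
    have hbd : ∀ n, ∀ p ∈ G', μ n p ≤ C / δ := by
      intro n p hp
      rw [le_div_iff₀ hδ]
      have h1 : μ n p * δ ≤ μ n p * f p.1 :=
        mul_le_mul_of_nonneg_left (Finset.inf'_le _ hp) (hμ0 n p)
      have h2 : μ n p * f p.1 ≤ ∑ q ∈ G', μ n q * f q.1 :=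
        Finset.single_le_sum (f := fun q => μ n q * f q.1)
          (fun q hq => mul_nonneg (hμ0 n q) (hfpos q hq).le) hp
      have h3 : ∑ q ∈ G', μ n q * f q.1 = f (u n) := by rw [hμeq n, hflin]
      linarith [hCn n]
    set B := C / δ with hBdef
    have hμB : ∀ n, (fun p : {p // p ∈ G'} => μ n p.1) ∈
        Set.univ.pi (fun _ : {p // p ∈ G'} => Set.Icc (0:ℝ) B) := by
      intro n
      rw [Set.mem_univ_pi]
      exact fun p => ⟨hμ0 n p.1, hbd n p.1 p.2⟩
    have hKcompact : IsCompact (Set.univ.pi fun _ : {p // p ∈ G'} => Set.Icc (0:ℝ) B) :=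
      isCompact_univ_pi fun _ => isCompact_Icc
    obtain ⟨ν, hνmem, φ, hφ, hνtend⟩ := hKcompact.tendsto_subseq hμB
    rw [Set.mem_univ_pi] at hνmem
    refine ⟨fun p => if h : p ∈ G' then ν ⟨p, h⟩ else 0, ?_, ?_⟩
    · intro p
      by_cases h : p ∈ G'
      · simp only [dif_pos h]
        exact (hνmem ⟨p, h⟩).1
      · simp [dif_neg h]
    · have hsum : ∑ p ∈ G', (if h : p ∈ G' then ν ⟨p, h⟩ else 0) • p.1
          = ∑ p ∈ G'.attach, ν p • (p : ((Fin m → ℝ) × ℝ)).1 := by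
        rw [← Finset.sum_attach G' (fun p => (if h : p ∈ G' then ν ⟨p, h⟩ else 0) • p.1)]
        exact Finset.sum_congr rfl fun p _ => by rw [dif_pos p.2]
      rw [hsum]
      have h1 : Filter.Tendsto (fun n => u (φ n)) Filter.atTop (nhds y) :=
        huy.comp hφ.tendsto_atTop
      have h2 : Filter.Tendsto (fun n => u (φ n)) Filter.atTop
          (nhds (∑ p ∈ G'.attach, ν p • (p : ((Fin m → ℝ) × ℝ)).1)) := by
        have heq : ∀ n, u (φ n) =
            ∑ p ∈ G'.attach, μ (φ n) p.1 • (p : ((Fin m → ℝ) × ℝ)).1 := by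
          intro n
          rw [hμeq (φ n)]
          exact (Finset.sum_attach G' (fun p => μ (φ n) p • p.1)).symm
        rw [show (fun n => u (φ n)) = fun n =>
            ∑ p ∈ G'.attach, μ (φ n) p.1 • (p : ((Fin m → ℝ) × ℝ)).1 from funext heq]
        refine tendsto_finset_sum _ fun p _ => ?_
        exact ((tendsto_pi_nhds.1 hνtend) p).smul_const _
      exact tendsto_nhds_unique h1 h2

/-! ### The DFA-dependent construction -/

section DFApart

variable {r m : ℕ} {Q : Type} [Fintype Q] (M : DFA (Alpha r m) Q)

/-- `τ` is a nonempty loop at a reachable state `q`, and `β` leads from `q` to an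
accepting state. -/
def good (τ β : Word r m) : Prop :=
  τ ≠ [] ∧ ∃ α : Word r m,
    M.evalFrom (M.evalFrom M.start α) τ = M.evalFrom M.start α ∧
    M.evalFrom (M.evalFrom M.start α) β ∈ M.accept

def SetV : Set ((Fin m → ℝ) × ℝ) :=
  {p | ∃ σ : Word r m, σ ∈ M.accepts ∧ σ.length ≤ Fintype.card Q ∧ p = (rho r m σ, 1)}

def SetD : Set ((Fin m → ℝ) × ℝ) :=
  {p | ∃ τ β : Word r m, good M τ β ∧ τ.length ≤ Fintype.card Q ∧
    β.length ≤ Fintype.card Q ∧ p = (dvec r m τ β, 0)}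

lemma finite_SetV : (SetV M).Finite := by
  have h : SetV M ⊆ (fun σ : Word r m => (rho r m σ, (1:ℝ))) ''
      {σ : Word r m | σ.length ≤ Fintype.card Q} := by
    rintro p ⟨σ, _, hlen, rfl⟩
    exact ⟨σ, hlen, rfl⟩
  exact ((List.finite_length_le (Alpha r m) (Fintype.card Q)).image _).subset h

lemma finite_SetD : (SetD M).Finite := by
  have h : SetD M ⊆ Set.image2 (fun τ β : Word r m => (dvec r m τ β, (0:ℝ)))
      {σ : Word r m | σ.length ≤ Fintype.card Q}
      {σ : Word r m | σ.length ≤ Fintype.card Q} := by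
    rintro p ⟨τ, β, _, h1, h2, rfl⟩
    exact ⟨τ, h1, β, h2, rfl⟩
  exact (Set.Finite.image2 _ (List.finite_length_le _ _) (List.finite_length_le _ _)).subset h

noncomputable def RV : Finset ((Fin m → ℝ) × ℝ) := (finite_SetV M).toFinset
noncomputable def RD : Finset ((Fin m → ℝ) × ℝ) := (finite_SetD M).toFinset
noncomputable def RR : Finset ((Fin m → ℝ) × ℝ) := RV M ∪ RD M

lemma mem_RV {p} : p ∈ RV M ↔ p ∈ SetV M := Set.Finite.mem_toFinset _
lemma mem_RD {p} : p ∈ RD M ↔ p ∈ SetD M := Set.Finite.mem_toFinset _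

lemma disjoint_RV_RD : Disjoint (RV M) (RD M) := by
  rw [Finset.disjoint_left]
  rintro p hV hD
  obtain ⟨σ, _, _, rfl⟩ := (mem_RV M).1 hV
  obtain ⟨τ, β, _, _, _, h⟩ := (mem_RD M).1 hD
  exact one_ne_zero (congrArg Prod.snd h)

/-- Every `dvec` direction of a good pair lies in the cone. -/
lemma dvec_mem_cone (hr : 2 ≤ r) :
    ∀ τ β : Word r m, good M τ β → (dvec r m τ β, (0:ℝ)) ∈ coneOf (RR M) := by
  suffices h : ∀ S T : ℕ, ∀ τ β : Word r m, τ.length + β.length ≤ S → τ.length ≤ T →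
      good M τ β → (dvec r m τ β, (0:ℝ)) ∈ coneOf (RR M) from
    fun τ β hg => h (τ.length + β.length) τ.length τ β le_rfl le_rfl hg
  intro S
  induction S using Nat.strong_induction_on with
  | _ S ihS =>
  intro T
  induction T using Nat.strong_induction_on with
  | _ T ihT =>
  rintro τ β hS hT ⟨hτne, α, hloop, hacc⟩
  have hτpos : 1 ≤ τ.length := List.length_pos_iff.2 hτne
  by_cases hβlen : Fintype.card Q + 1 ≤ β.length
  · -- split β around an inner loop
    obtain ⟨q', β₁, b, β₂, hsplit, hlen2, hbne, h1, h2, h3⟩ :=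
      M.evalFrom_split (x := β) (s := M.evalFrom M.start α)
        (t := M.evalFrom (M.evalFrom M.start α) β) (by omega) rfl
    have hbpos : 1 ≤ b.length := List.length_pos_iff.2 hbne
    have hlenβ : β.length = β₁.length + b.length + β₂.length := by
      rw [hsplit]; simp [List.length_append]; omega
    have hq' : M.evalFrom M.start (α ++ β₁) = q' := by
      rw [DFA.evalFrom_of_append, h1]
    have hc : 0 ≤ (r:ℝ) ^ β₁.length * ((r:ℝ) ^ b.length - 1) :=
      mul_nonneg (by positivity) (pow_sub_one_pos hr (by simpa using hbne)).le
    have e : (dvec r m τ β, (0:ℝ)) = (dvec r m τ (β₁ ++ β₂), (0:ℝ)) +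
        ((r:ℝ) ^ β₁.length * ((r:ℝ) ^ b.length - 1)) • (dvec r m b β₂, (0:ℝ)) := by
      rw [Prod.smul_mk, Prod.mk_add_mk, hsplit, List.append_assoc,
        dred_beta hr τ β₁ b β₂ hbne]
      norm_num
    rw [e]
    refine coneOf_add_mem ?_ (coneOf_smul_mem hc ?_)
    · refine ihS (τ.length + (β₁ ++ β₂).length) ?_ (τ.length) τ (β₁ ++ β₂) le_rfl le_rfl
        ⟨hτne, α, hloop, ?_⟩
      · simp only [List.length_append]; omega
      · rw [DFA.evalFrom_of_append, h1, h3]; exact hacc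
    · refine ihS (b.length + β₂.length) (by omega) (b.length) b β₂ le_rfl le_rfl
        ⟨hbne, α ++ β₁, ?_, ?_⟩
      · rw [hq']; exact h2
      · rw [hq', h3]; exact hacc
  · by_cases hτlen : Fintype.card Q + 1 ≤ τ.length
    · -- split τ around an inner loop
      obtain ⟨q', τ₁, b, τ₂, hsplit, hlen2, hbne, h1, h2, h3⟩ :=
        M.evalFrom_split (x := τ) (s := M.evalFrom M.start α)
          (t := M.evalFrom M.start α) (by omega) hloop
      have hbpos : 1 ≤ b.length := List.length_pos_iff.2 hbne
      have hlenτ : τ.length = τ₁.length + b.length + τ₂.length := by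
        rw [hsplit]; simp [List.length_append]; omega
      have hτ2ne : τ₂ ≠ [] := by
        intro h
        rw [h, List.length_nil] at hlenτ
        omega
      have hτ2pos : 1 ≤ τ₂.length := List.length_pos_iff.2 hτ2ne
      have hq' : M.evalFrom M.start (α ++ τ₁) = q' := by
        rw [DFA.evalFrom_of_append, h1]
      have hdenpos : (0:ℝ) < (r:ℝ) ^ (τ₁.length + b.length + τ₂.length) - 1 :=
        pow_sub_one_pos hr (by omega)
      have hA : 0 ≤ ((r : ℝ) ^ (τ₁.length + τ₂.length) - 1) /
          ((r : ℝ) ^ (τ₁.length + b.length + τ₂.length) - 1) :=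
        div_nonneg (pow_sub_one_pos hr (by omega)).le hdenpos.le
      have hB : 0 ≤ ((r : ℝ) ^ τ₁.length * ((r : ℝ) ^ b.length - 1)) /
          ((r : ℝ) ^ (τ₁.length + b.length + τ₂.length) - 1) :=
        div_nonneg (mul_nonneg (by positivity)
          (pow_sub_one_pos hr (by omega)).le) hdenpos.le
      have e : (dvec r m τ β, (0:ℝ)) =
          (((r : ℝ) ^ (τ₁.length + τ₂.length) - 1) /
              ((r : ℝ) ^ (τ₁.length + b.length + τ₂.length) - 1)) •
            (dvec r m (τ₁ ++ τ₂) β, (0:ℝ)) +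
          (((r : ℝ) ^ τ₁.length * ((r : ℝ) ^ b.length - 1)) /
              ((r : ℝ) ^ (τ₁.length + b.length + τ₂.length) - 1)) •
            (dvec r m b (τ₂ ++ β), (0:ℝ)) := by
        rw [Prod.smul_mk, Prod.smul_mk, Prod.mk_add_mk, hsplit, List.append_assoc,
          dred_tau hr τ₁ b τ₂ β hbne hτ2ne]
        norm_num
      rw [e]
      refine coneOf_add_mem (coneOf_smul_mem hA ?_) (coneOf_smul_mem hB ?_)
      · refine ihS ((τ₁ ++ τ₂).length + β.length) ?_ ((τ₁ ++ τ₂).length) (τ₁ ++ τ₂) β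
          le_rfl le_rfl ⟨?_, α, ?_, hacc⟩
        · simp only [List.length_append]; omega
        · intro h
          have := congrArg List.length h
          simp only [List.length_append, List.length_nil] at this
          omega
        · rw [DFA.evalFrom_of_append, h1, h3]
      · rcases Nat.eq_zero_or_pos τ₁.length with h0 | hpos
        · refine ihT (Fintype.card Q) (by omega) b (τ₂ ++ β) ?_ (by omega)
            ⟨hbne, α ++ τ₁, ?_, ?_⟩
          · simp only [List.length_append]; omega
          · rw [hq']; exact h2
          · rw [hq', DFA.evalFrom_of_append, h3]; exact hacc
        · refine ihS (b.length + (τ₂ ++ β).length) ?_ (b.length) b (τ₂ ++ β) le_rfl le_rfl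
            ⟨hbne, α ++ τ₁, ?_, ?_⟩
          · simp only [List.length_append]; omega
          · rw [hq']; exact h2
          · rw [hq', DFA.evalFrom_of_append, h3]; exact hacc
    · -- generator
      exact mem_coneOf_of_mem (Finset.mem_union_right _ ((mem_RD M).2
        ⟨τ, β, ⟨hτne, α, hloop, hacc⟩, by omega, by omega, rfl⟩))

/-- Every accepted word's vector lies in the cone. -/
lemma rho_mem_cone (hr : 2 ≤ r) :
    ∀ σ : Word r m, σ ∈ M.accepts → (rho r m σ, (1:ℝ)) ∈ coneOf (RR M) := by
  suffices h : ∀ S : ℕ, ∀ σ : Word r m, σ.length ≤ S → σ ∈ M.accepts →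
      (rho r m σ, (1:ℝ)) ∈ coneOf (RR M) from
    fun σ hσ => h σ.length σ le_rfl hσ
  intro S
  induction S using Nat.strong_induction_on with
  | _ S ihS =>
  intro σ hS hσ
  by_cases hlen : σ.length ≤ Fintype.card Q
  · exact mem_coneOf_of_mem (Finset.mem_union_left _ ((mem_RV M).2 ⟨σ, hσ, hlen, rfl⟩))
  · have hacc : M.evalFrom M.start σ ∈ M.accept := hσ
    obtain ⟨q, α, τ, β, hsplit, hlen2, hτne, h1, h2, h3⟩ :=
      M.evalFrom_split (x := σ) (s := M.start) (t := M.evalFrom M.start σ)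
        (by omega) rfl
    have hτpos : 1 ≤ τ.length := List.length_pos_iff.2 hτne
    have hlenσ : σ.length = α.length + τ.length + β.length := by
      rw [hsplit]; simp [List.length_append]; omega
    have hc : 0 ≤ (r:ℝ) ^ α.length * ((r:ℝ) ^ τ.length - 1) :=
      mul_nonneg (by positivity) (pow_sub_one_pos hr (by omega)).le
    have e : (rho r m σ, (1:ℝ)) = (rho r m (α ++ β), (1:ℝ)) +
        ((r:ℝ) ^ α.length * ((r:ℝ) ^ τ.length - 1)) • (dvec r m τ β, (0:ℝ)) := by
      rw [Prod.smul_mk, Prod.mk_add_mk, hsplit, List.append_assoc,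
        pump_identity hr α τ β hτne]
      norm_num
    rw [e]
    refine coneOf_add_mem ?_ (coneOf_smul_mem hc ?_)
    · refine ihS (α ++ β).length ?_ (α ++ β) le_rfl ?_
      · simp only [List.length_append]; omega
      · show M.evalFrom M.start (α ++ β) ∈ M.accept
        rw [DFA.evalFrom_of_append, h1, h3]
        exact hacc
    · exact dvec_mem_cone M hr τ β ⟨hτne, α, by rw [h1]; exact h2, by rw [h1, h3]; exact hacc⟩


lemma evalFrom_repK {q : Q} {τ : Word r m} (h : M.evalFrom q τ = q) :
    ∀ k, M.evalFrom q (repK τ k) = q := by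
  intro k
  induction k with
  | zero => rfl
  | succ k ih => rw [repK_succ, DFA.evalFrom_of_append, h, ih]

/-- The compact "vertex" part. -/
noncomputable def KK : Set (Fin m → ℝ) := convexHull ℝ ↑((RV M).image Prod.fst)

/-- The conic "recession" part. -/
def CCset : Set (Fin m → ℝ) :=
  {y | ∃ μ : ((Fin m → ℝ) × ℝ) → ℝ, (∀ p, 0 ≤ μ p) ∧ y = ∑ p ∈ RD M, μ p • p.1}

lemma convex_CCset : Convex ℝ (CCset M) := by
  rintro x ⟨μ1, h1, rfl⟩ y ⟨μ2, h2, rfl⟩ a b ha hb hab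
  refine ⟨fun p => a * μ1 p + b * μ2 p,
    fun p => add_nonneg (mul_nonneg ha (h1 p)) (mul_nonneg hb (h2 p)), ?_⟩
  rw [Finset.smul_sum, Finset.smul_sum, ← Finset.sum_add_distrib]
  refine Finset.sum_congr rfl fun p _ => ?_
  rw [smul_smul, smul_smul, ← add_smul]

lemma isClosed_CCset (hr : 2 ≤ r) : IsClosed (CCset M) := by
  refine isClosed_nonnegSpan (RD M) ?_
  intro p hp j
  obtain ⟨τ, β, _, _, _, rfl⟩ := (mem_RD M).1 hp
  exact dvec_nonneg hr τ β j

lemma snd_RV {p : (Fin m → ℝ) × ℝ} (hp : p ∈ RV M) : p.2 = 1 := by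
  obtain ⟨σ, _, _, rfl⟩ := (mem_RV M).1 hp; rfl

lemma snd_RD {p : (Fin m → ℝ) × ℝ} (hp : p ∈ RD M) : p.2 = 0 := by
  obtain ⟨τ, β, _, _, _, rfl⟩ := (mem_RD M).1 hp; rfl

lemma sum_RR (g : ((Fin m → ℝ) × ℝ) → ((Fin m → ℝ) × ℝ)) :
    ∑ p ∈ RR M, g p = ∑ p ∈ RV M, g p + ∑ p ∈ RD M, g p :=
  Finset.sum_union (disjoint_RV_RD M)

lemma polyOf_RR_eq : polyOf (RR M) = KK M + CCset M := by
  ext x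
  constructor
  · rintro ⟨t, ht, hx⟩
    rw [sum_RR] at hx
    have hx1 := congrArg Prod.fst hx
    have hx2 := congrArg Prod.snd hx
    simp only [Prod.fst_add, Prod.snd_add, Prod.fst_sum, Prod.snd_sum,
      Prod.smul_fst, Prod.smul_snd, smul_eq_mul] at hx1 hx2
    have hsum1 : ∑ p ∈ RV M, t p * p.2 = ∑ p ∈ RV M, t p :=
      Finset.sum_congr rfl fun p hp => by rw [snd_RV M hp, mul_one]
    have hsum0 : ∑ p ∈ RD M, t p * p.2 = 0 :=
      Finset.sum_eq_zero fun p hp => by rw [snd_RD M hp, mul_zero]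
    rw [hsum1, hsum0, add_zero] at hx2
    rw [hx1]
    refine Set.add_mem_add ?_ ⟨t, ht, rfl⟩
    have hcm := Finset.centerMass_mem_convexHull (RV M) (w := t) (z := Prod.fst)
      (fun p _ => ht p) (by rw [← hx2]; norm_num)
      (fun p hp => Finset.mem_coe.2 (Finset.mem_image_of_mem Prod.fst hp))
    rwa [Finset.centerMass, ← hx2, inv_one, one_smul] at hcm
  · rintro hx
    rw [Set.mem_add] at hx
    obtain ⟨v, hv, w, ⟨μ, hμ0, rfl⟩, rfl⟩ := hx
    rw [KK, Finset.convexHull_eq] at hv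
    obtain ⟨wt, hwt0, hwt1, hwteq⟩ := hv
    have hinj : Function.Injective (fun y : Fin m → ℝ => (y, (1:ℝ))) := by
      intro a b h
      exact congrArg Prod.fst h
    have hRV : RV M = ((RV M).image Prod.fst).image (fun y => (y, (1:ℝ))) := by
      ext p
      simp only [Finset.mem_image]
      constructor
      · intro hp
        exact ⟨p.1, ⟨p, hp, rfl⟩, by rw [← snd_RV M hp]⟩
      · rintro ⟨y, ⟨q, hq, rfl⟩, rfl⟩
        rwa [← snd_RV M hq]
    refine ⟨fun p => if p ∈ RV M then wt p.1 else μ p, ?_, ?_⟩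
    · intro p
      by_cases h : p ∈ RV M
      · simp only [if_pos h]
        exact hwt0 p.1 (Finset.mem_image_of_mem _ h)
      · simp only [if_neg h]; exact hμ0 p
    · rw [sum_RR]
      have hV : ∑ p ∈ RV M, (if p ∈ RV M then wt p.1 else μ p) • p = (v, 1) := by
        rw [Finset.sum_congr rfl (fun p hp => by rw [if_pos hp])]
        rw [show ∑ p ∈ RV M, wt p.1 • p
            = ∑ y ∈ (RV M).image Prod.fst, wt y • (y, (1:ℝ)) by
          conv_lhs => rw [hRV]
          rw [Finset.sum_image (fun a _ b _ h => hinj h)]]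
        apply Prod.ext
        · rw [Prod.fst_sum]
          simp only [Prod.smul_fst]
          have := hwteq
          rw [Finset.centerMass, hwt1, inv_one, one_smul] at this
          exact this
        · rw [Prod.snd_sum]
          simp only [Prod.smul_snd, smul_eq_mul, mul_one]
          exact hwt1
      have hD : ∑ p ∈ RD M, (if p ∈ RV M then wt p.1 else μ p) • p
          = (∑ p ∈ RD M, μ p • p.1, 0) := by
        rw [Finset.sum_congr rfl (fun p hp => by
          rw [if_neg (Finset.disjoint_right.1 (disjoint_RV_RD M) hp)])]
        apply Prod.ext
        · rw [Prod.fst_sum]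
          simp only [Prod.smul_fst]
        · rw [Prod.snd_sum]
          simp only [Prod.smul_snd, smul_eq_mul]
          exact Finset.sum_eq_zero fun p hp => by rw [snd_RD M hp, mul_zero]
      rw [hV, hD, Prod.mk_add_mk, add_zero]

lemma recession (hr : 2 ≤ r) {p : (Fin m → ℝ) × ℝ} (hp : p ∈ RD M) {c : ℝ} (hc : 0 ≤ c) :
    ∀ x ∈ closure (convexHull ℝ (rhoSet r m M.accepts)),
      x + c • p.1 ∈ closure (convexHull ℝ (rhoSet r m M.accepts)) := by
  obtain ⟨τ, β, ⟨hτne, α, hloop, hacc⟩, _, _, rfl⟩ := (mem_RD M).1 hp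
  have hτpos : τ.length ≠ 0 := by simpa using hτne
  have hr1 : (1:ℝ) < (r:ℝ) := by
    have : (2:ℝ) ≤ (r:ℝ) := by exact_mod_cast hr
    linarith
  have hrt1 : (1:ℝ) < (r:ℝ) ^ τ.length := one_lt_pow₀ hr1 hτpos
  have hrne : (r:ℝ) ≠ 0 := by positivity
  have hs1 : (r:ℝ) ^ τ.length - 1 ≠ 0 := by linarith
  have key : ∀ x ∈ convexHull ℝ (rhoSet r m M.accepts),
      x + c • dvec r m τ β ∈ closure (convexHull ℝ (rhoSet r m M.accepts)) := by
    intro x hx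
    have hwk : ∀ k, (α ++ (repK τ k ++ β)) ∈ M.accepts := by
      intro k
      show M.evalFrom M.start (α ++ (repK τ k ++ β)) ∈ M.accept
      rw [DFA.evalFrom_of_append, DFA.evalFrom_of_append, evalFrom_repK M hloop k]
      exact hacc
    set ck : ℕ → ℝ := fun k =>
      ((r:ℝ) ^ α.length * ((r:ℝ) ^ τ.length) ^ k)⁻¹ with hckdef
    set u : Fin m → ℝ := c • (((r:ℝ) ^ α.length)⁻¹ • rho r m α -
      ((r:ℝ) ^ τ.length - 1)⁻¹ • rho r m τ - ((r:ℝ) ^ α.length)⁻¹ • x) with hudef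
    have hz : ∀ k, (1 - c * ck k) • x + (c * ck k) • rho r m (α ++ (repK τ k ++ β))
        = (x + c • dvec r m τ β) + ((((r:ℝ) ^ τ.length) ^ k)⁻¹) • u := by
      intro k
      have hA : (((r:ℝ) ^ τ.length) ^ k) ≠ 0 := by positivity
      have hB : ((r:ℝ) ^ α.length) ≠ 0 := by positivity
      rw [rho_append, rho_append, repK_length, rho_repK hr τ hτne k, hckdef, hudef]
      simp only [pow_mul]
      unfold dvec
      match_scalars <;> field_simp <;> (try ring) <;> tauto
    have hpowtend : Filter.Tendsto (fun k => ((((r:ℝ) ^ τ.length) ^ k)⁻¹))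
        Filter.atTop (nhds 0) := by
      rw [show (fun k => ((((r:ℝ) ^ τ.length) ^ k)⁻¹))
          = fun k => ((((r:ℝ) ^ τ.length)⁻¹) ^ k) from funext fun k => (inv_pow _ _).symm]
      exact tendsto_pow_atTop_nhds_zero_of_lt_one (by positivity)
        ((inv_lt_one₀ (by positivity)).2 hrt1)
    have htend : Filter.Tendsto
        (fun k => (1 - c * ck k) • x + (c * ck k) • rho r m (α ++ (repK τ k ++ β)))
        Filter.atTop (nhds (x + c • dvec r m τ β)) := by
      rw [show (fun k => (1 - c * ck k) • x + (c * ck k) • rho r m (α ++ (repK τ k ++ β)))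
          = fun k => (x + c • dvec r m τ β) + ((((r:ℝ) ^ τ.length) ^ k)⁻¹) • u
        from funext hz]
      have := tendsto_const_nhds (α := ℕ) (x := x + c • dvec r m τ β)
        |>.add (hpowtend.smul_const u)
      simpa using this
    have hcktend : Filter.Tendsto (fun k => c * ck k) Filter.atTop (nhds 0) := by
      have heq : (fun k => c * ck k)
          = fun k => (c * ((r:ℝ) ^ α.length)⁻¹) * ((((r:ℝ) ^ τ.length) ^ k)⁻¹) := by
        funext k
        rw [hckdef]
        simp only [mul_inv]
        ring
      rw [heq]
      have := hpowtend.const_mul (c * ((r:ℝ) ^ α.length)⁻¹)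
      simpa using this
    have hev : ∀ᶠ k in Filter.atTop,
        (1 - c * ck k) • x + (c * ck k) • rho r m (α ++ (repK τ k ++ β))
          ∈ convexHull ℝ (rhoSet r m M.accepts) := by
      filter_upwards [hcktend.eventually_le_const (by norm_num : (0:ℝ) < 1)] with k hk
      have hck0 : 0 ≤ c * ck k := mul_nonneg hc (by positivity)
      exact (convex_convexHull ℝ _) hx
        (subset_convexHull ℝ _ ⟨_, hwk k, rfl⟩)
        (by linarith) hck0 (by ring)
    exact mem_closure_of_tendsto htend hev
  intro x hx
  have hcont : Continuous (fun y : Fin m → ℝ => y + c • dvec r m τ β) :=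
    continuous_id.add continuous_const
  have := map_mem_closure hcont hx key
  rwa [closure_closure] at this

end DFApart

end CHR

/-- the closure of the convex hull of a regular set of integer vectors
is represented by a finite set of rays. -/
theorem closure_convexHull_regular_eq_polyOf
    (r m : ℕ) (hr : 2 ≤ r) (hm : 1 ≤ m)
    (L : Set (Word r m)) (hL : Language.IsRegular L) :
    ∃ R : Finset ((Fin m → ℝ) × ℝ), (∀ p ∈ R, 0 ≤ p.2) ∧
      closure (convexHull ℝ (rhoSet r m L)) = polyOf R := by
  obtain ⟨Q, fQ, M, rfl⟩ := hL
  refine ⟨CHR.RR M, ?_, ?_⟩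
  · intro p hp
    rcases Finset.mem_union.1 hp with h | h
    · rw [CHR.snd_RV M h]; exact zero_le_one
    · rw [CHR.snd_RD M h]
  · apply Set.Subset.antisymm
    · have hclosed : IsClosed (polyOf (CHR.RR M)) := by
        rw [CHR.polyOf_RR_eq M]
        exact (CHR.isClosed_CCset M hr).add_left_of_isCompact
          ((Finset.finite_toSet _).isCompact_convexHull ℝ)
      refine closure_minimal (convexHull_min ?_ ?_) hclosed
      · rintro x ⟨σ, hσ, rfl⟩
        exact CHR.rho_mem_cone M hr σ hσ
      · rw [CHR.polyOf_RR_eq M]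
        exact (convex_convexHull ℝ _).add (CHR.convex_CCset M)
    · rw [CHR.polyOf_RR_eq M]
      rintro x hx
      rw [Set.mem_add] at hx
      obtain ⟨v, hv, w, ⟨μ, hμ0, rfl⟩, rfl⟩ := hx
      have hvcl : v ∈ closure (convexHull ℝ (rhoSet r m M.accepts)) := by
        refine subset_closure (convexHull_mono ?_ hv)
        rintro y hy
        rw [Finset.coe_image] at hy
        obtain ⟨p, hp, rfl⟩ := hy
        obtain ⟨σ, hσ, _, rfl⟩ := (CHR.mem_RV M).1 hp
        exact ⟨σ, hσ, rfl⟩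
      have main : ∀ s : Finset ((Fin m → ℝ) × ℝ), s ⊆ CHR.RD M →
          v + ∑ p ∈ s, μ p • p.1 ∈ closure (convexHull ℝ (rhoSet r m M.accepts)) := by
        intro s
        induction s using Finset.induction_on with
        | empty => intro _; simpa using hvcl
        | @insert q s hq ih =>
            intro hsub
            rw [Finset.sum_insert hq]
            have h1 := ih (fun p hp => hsub (Finset.mem_insert_of_mem hp))
            have h2 := CHR.recession M hr (hsub (Finset.mem_insert_self q s)) (hμ0 q)
              _ h1
            rw [show v + (μ q • q.1 + ∑ p ∈ s, μ p • p.1)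
                = (v + ∑ p ∈ s, μ p • p.1) + μ q • q.1 from by abel]
            exact h2
      exact main (CHR.RD M) (le_refl _)
end
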